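/- (Abstract refined Sobolev inequality) Let (M, μ) be a measure space, A a nonnegative self-adjoint operator on L²(M, μ), and θ : ℝ → ℝ a bounded continuous function with θ ≡ 1 on [−c, c] for some c > 0. For s > 0, σ > 0 set p = 2(σ + s)/σ, ‖u‖_{Ḣ^s_A} = ‖A^s u‖_{L²}, and ‖u‖_{Ḃ^{-σ}_A} = sup_{k ∈ ℤ} 2^{-kσ} ‖θ(2^{-k} A) u‖_{L^∞}. Then for every u ∈ Dom(A^s) with ‖u‖_{Ḃ^{-σ}_A} < ∞, one has ‖u‖_{L^p} ≤ C ‖u‖_{Ḃ^{-σ}_A}^{1 − 2/p} ‖u‖_{Ḣ^s_A}^{2/p}, with C = 2 ‖1 − θ‖_{L^∞}^{2/p} (p/(p−2))^{1/p} (2/c)^{σ(p−2)/p}. -/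

import Mathlib

open MeasureTheory ENNReal NNReal

open Set in
/-- Chebyshev-type bound used repeatedly: if on the measurable set `S` we have
`a ≤ φ x` a.e. (with `a = ofReal a₀`), then `ofReal a₀ * μ S ≤ ∫⁻ φ`. -/
lemma ars_cheby {M : Type*} [MeasurableSpace M] (μ : Measure M) {S : Set M}
    (hS : MeasurableSet S) {a₀ : ℝ} {φ : M → ℝ}
    (h : ∀ᵐ x ∂μ, x ∈ S → a₀ ≤ φ x) :
    ENNReal.ofReal a₀ * μ S ≤ ∫⁻ x, ENNReal.ofReal (φ x) ∂μ := by
  rw [← lintegral_indicator_const hS (ENNReal.ofReal a₀)]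
  apply lintegral_mono_ae
  filter_upwards [h] with x hx
  by_cases hxS : x ∈ S
  · rw [Set.indicator_of_mem hxS]
    exact ENNReal.ofReal_le_ofReal (hx hxS)
  · rw [Set.indicator_of_notMem hxS]; exact zero_le

/-- Abstract refined Sobolev inequality. Here `v k` plays the role of `θ(2^{-k}A)u`
(with `‖v k‖_∞ ≤ 2^{kσ} B`, `B` the Besov norm `‖u‖_{Ḃ^{-σ}_A}`), `ν` is the spectral
measure `d(u, E_t u)` of the nonnegative selfadjoint operator `A` at `u` (so that
`‖u - v k‖_{L²}² ≤ (sup|1-θ|)² ν({|t| > c 2^k})` since `θ ≡ 1` on `[-c,c]`, and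
`∫ |t|^{2s} dν = ‖A^s u‖² = H²`). Then `‖u‖_{L^p} ≤ C B^{1-2/p} H^{2/p}` with the
explicit constant `C = 2 ‖1-θ‖_∞^{2/p} (p/(p-2))^{1/p} (2/c)^{σ(p-2)/p}`. -/
theorem abstract_refined_sobolev {M : Type*} [MeasurableSpace M] (μ : Measure M)
    (u : M → ℝ) (v : ℤ → M → ℝ) (ν : Measure ℝ)
    (s σ c B H Mθ : ℝ) (hs : 0 < s) (hσ : 0 < σ) (hc : 0 < c)
    (hB : 0 ≤ B) (hH : 0 ≤ H) (hMθ : 0 ≤ Mθ)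
    (p : ℝ) (hp : p = 2 * (σ + s) / σ)
    (hv : ∀ k : ℤ, ∀ᵐ x ∂μ, |v k x| ≤ (2:ℝ) ^ (σ * (k:ℝ)) * B)
    (hw : ∀ k : ℤ, ∫⁻ x, ENNReal.ofReal ((u x - v k x) ^ 2) ∂μ
            ≤ ENNReal.ofReal (Mθ ^ 2) * ν {t | c * (2:ℝ) ^ (k:ℝ) < |t|})
    (hH2 : ∫⁻ t, ENNReal.ofReal (|t| ^ (2*s)) ∂ν = ENNReal.ofReal (H ^ 2)) :
    eLpNorm u (ENNReal.ofReal p) μ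
      ≤ ENNReal.ofReal
          ((2 * Mθ ^ (2/p) * (p/(p-2)) ^ (1/p) * (2/c) ^ (σ*(p-2)/p))
            * B ^ (1 - 2/p) * H ^ (2/p)) := by
  have hσ' : σ ≠ 0 := hσ.ne'
  have hps : p = 2 + 2*s/σ := by rw [hp]; field_simp <;> ring
  have hsσ : 0 < 2*s/σ := by positivity
  have hp2 : 2 < p := by rw [hps]; linarith
  have hp0 : 0 < p := by linarith
  have hpm2 : 0 < p - 2 := by linarith
  have hσp2 : σ * (p - 2) = 2 * s := by rw [hps]; field_simp <;> ring
  set C' := (2 * Mθ ^ (2/p) * (p/(p-2)) ^ (1/p) * (2/c) ^ (σ*(p-2)/p))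
      * B ^ (1 - 2/p) * H ^ (2/p) with hC'def
  have hC'nn : 0 ≤ C' := by
    have h1 : (0:ℝ) ≤ Mθ ^ (2/p) := Real.rpow_nonneg hMθ _
    have h2 : (0:ℝ) ≤ (p/(p-2)) ^ (1/p) := Real.rpow_nonneg (by positivity) _
    have h3 : (0:ℝ) ≤ (2/c) ^ (σ*(p-2)/p) := Real.rpow_nonneg (by positivity) _
    have h4 : (0:ℝ) ≤ B ^ (1 - 2/p) := Real.rpow_nonneg hB _
    have h5 : (0:ℝ) ≤ H ^ (2/p) := Real.rpow_nonneg hH _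
    rw [hC'def]; positivity
  -- the measurable minorant
  obtain ⟨g₀, g₀meas, g₀le, g₀int⟩ :=
    exists_measurable_le_lintegral_eq μ (fun x => (‖u x‖₊ : ℝ≥0∞) ^ p)
  set r : M → ℝ := fun x => (g₀ x).toReal with hrdef
  have hrmeas : Measurable r := g₀meas.ennreal_toReal
  have hrnn : ∀ x, 0 ≤ r x := fun x => ENNReal.toReal_nonneg
  have hFne : ∀ x, (‖u x‖₊ : ℝ≥0∞) ^ p ≠ ∞ := fun x =>
    (ENNReal.rpow_lt_top_of_nonneg hp0.le ENNReal.coe_ne_top).ne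
  have hofr : ∀ x, ENNReal.ofReal (r x) = g₀ x := fun x =>
    ENNReal.ofReal_toReal (ne_top_of_le_ne_top (hFne x) (g₀le x))
  have hrle : ∀ x, r x ≤ |u x| ^ p := by
    intro x
    have h1 : r x ≤ ((‖u x‖₊ : ℝ≥0∞) ^ p).toReal :=
      ENNReal.toReal_mono (hFne x) (g₀le x)
    refine h1.trans_eq ?_
    rw [← ENNReal.toReal_rpow, ← enorm_eq_nnnorm, Real.enorm_eq_ofReal_abs,
      ENNReal.toReal_ofReal (abs_nonneg _)]
  have layer1 : ∫⁻ x, (‖u x‖₊ : ℝ≥0∞) ^ p ∂μ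
      = ∫⁻ t in Set.Ioi (0:ℝ), μ {x | t < r x} := by
    rw [g₀int,
      show ∫⁻ x, g₀ x ∂μ = ∫⁻ x, ENNReal.ofReal (r x) ∂μ from
        lintegral_congr fun x => (hofr x).symm]
    exact lintegral_eq_lintegral_meas_lt μ (Filter.Eventually.of_forall hrnn)
      hrmeas.aemeasurable
  -- the key Chebyshev estimate, for any `t > 0` and any scale `k` adapted to `t`
  have keylemma : ∀ t : ℝ, 0 < t → ∀ k : ℤ,
      (2:ℝ) ^ (σ * (k:ℝ)) * B ≤ t ^ (1/p) / 2 →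
      μ {x | t < r x} ≤ (ENNReal.ofReal ((t ^ (1/p) / 2) ^ 2))⁻¹
        * (ENNReal.ofReal (Mθ ^ 2) * ν {τ | c * (2:ℝ) ^ (k:ℝ) < |τ|}) := by
    intro t ht k hvb
    set lam := t ^ (1/p) with hlamdef
    have hlam0 : 0 < lam := Real.rpow_pos_of_pos ht _
    set S := {x | t < r x} with hSdef
    have hSmeas : MeasurableSet S := measurableSet_lt measurable_const hrmeas
    have key : ENNReal.ofReal ((lam/2)^2) * μ S
        ≤ ENNReal.ofReal (Mθ ^ 2) * ν {τ | c * (2:ℝ) ^ (k:ℝ) < |τ|} := by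
      refine le_trans (ars_cheby μ hSmeas ?_) (hw k)
      filter_upwards [hv k] with x hvx hxS
      have h6 : lam < |u x| := by
        have h6a : t < |u x| ^ p := lt_of_lt_of_le hxS (hrle x)
        have h6b := Real.rpow_lt_rpow ht.le h6a (by positivity : (0:ℝ) < 1/p)
        rwa [← Real.rpow_mul (abs_nonneg _), mul_one_div_cancel hp0.ne',
          Real.rpow_one] at h6b
      have h7 : |v k x| ≤ lam/2 := hvx.trans hvb
      have h8 : lam/2 ≤ |u x - v k x| := by
        have := abs_sub_abs_le_abs_sub (u x) (v k x)
        linarith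
      calc (lam/2)^2 ≤ |u x - v k x|^2 := by
            apply pow_le_pow_left₀ (by positivity) h8
        _ = (u x - v k x)^2 := sq_abs _
    have hpos : ENNReal.ofReal ((lam/2)^2) ≠ 0 := by
      simp only [ne_eq, ENNReal.ofReal_eq_zero, not_le]
      positivity
    rw [← one_mul (μ S), ← ENNReal.inv_mul_cancel hpos ENNReal.ofReal_ne_top,
      mul_assoc]
    exact mul_le_mul_right key _
  -- reduce to the lintegral bound
  suffices hmain : ∫⁻ x, (‖u x‖₊ : ℝ≥0∞) ^ p ∂μ ≤ ENNReal.ofReal (C' ^ p) by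
    have hne0 : ENNReal.ofReal p ≠ 0 := by
      simp [ENNReal.ofReal_eq_zero, not_le, hp0]
    rw [eLpNorm_eq_lintegral_rpow_enorm_toReal hne0 ENNReal.ofReal_ne_top,
      ENNReal.toReal_ofReal hp0.le]
    calc (∫⁻ x, (‖u x‖₊ : ℝ≥0∞) ^ p ∂μ) ^ (1/p)
        ≤ (ENNReal.ofReal (C' ^ p)) ^ (1/p) :=
          ENNReal.rpow_le_rpow hmain (by positivity)
      _ = ENNReal.ofReal C' := by
          rw [ENNReal.ofReal_rpow_of_nonneg (by positivity) (by positivity),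
            ← Real.rpow_mul hC'nn, mul_one_div_cancel hp0.ne', Real.rpow_one]
  rcases eq_or_lt_of_le hB with hB0 | hBpos
  · -- degenerate case B = 0 : the LHS integral vanishes
    rw [layer1]
    have hzero : ∀ t ∈ Set.Ioi (0:ℝ), μ {x | t < r x} = 0 := by
      intro t ht
      rw [Set.mem_Ioi] at ht
      have hlam0 : 0 < t ^ (1/p) := Real.rpow_pos_of_pos ht _
      set q : ℝ := ((2:ℝ) ^ (2*s))⁻¹ with hqdef
      have h2s1 : 1 < (2:ℝ) ^ (2*s) :=
        Real.one_lt_rpow_iff_of_pos two_pos |>.2 (Or.inl ⟨one_lt_two, by positivity⟩)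
      have hq0 : 0 ≤ q := by positivity
      have hq1 : q < 1 := by
        rw [hqdef]
        exact inv_lt_one_of_one_lt₀ h2s1
      set K₁ : ℝ := ((t ^ (1/p)/2)^2)⁻¹ * (Mθ^2 * ((c ^ (2*s))⁻¹ * H^2)) with hK₁def
      -- Chebyshev for ν
      have hcheb : ∀ k : ℤ, ν {τ | c * (2:ℝ) ^ (k:ℝ) < |τ|}
          ≤ ENNReal.ofReal (((c * (2:ℝ) ^ (k:ℝ)) ^ (2*s))⁻¹ * H^2) := by
        intro k
        have hck : (0:ℝ) < c * (2:ℝ) ^ (k:ℝ) := by positivity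
        have hmeasset : MeasurableSet {τ : ℝ | c * (2:ℝ) ^ (k:ℝ) < |τ|} :=
          measurableSet_lt measurable_const continuous_abs.measurable
        have h1 : ENNReal.ofReal ((c * (2:ℝ) ^ (k:ℝ)) ^ (2*s))
              * ν {τ | c * (2:ℝ) ^ (k:ℝ) < |τ|} ≤ ENNReal.ofReal (H^2) := by
          rw [← hH2]
          refine ars_cheby ν hmeasset (Filter.Eventually.of_forall fun τ hτ => ?_)
          exact Real.rpow_le_rpow hck.le (le_of_lt hτ) (by positivity)
        have hpos : ENNReal.ofReal ((c * (2:ℝ) ^ (k:ℝ)) ^ (2*s)) ≠ 0 := by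
          simp only [ne_eq, ENNReal.ofReal_eq_zero, not_le]
          positivity
        calc ν {τ | c * (2:ℝ) ^ (k:ℝ) < |τ|}
            ≤ (ENNReal.ofReal ((c * (2:ℝ) ^ (k:ℝ)) ^ (2*s)))⁻¹ * ENNReal.ofReal (H^2) := by
              rw [← one_mul (ν _), ← ENNReal.inv_mul_cancel hpos ENNReal.ofReal_ne_top,
                mul_assoc]
              exact mul_le_mul_right h1 _
          _ = ENNReal.ofReal (((c * (2:ℝ) ^ (k:ℝ)) ^ (2*s))⁻¹ * H^2) := by
              rw [← ENNReal.ofReal_inv_of_pos (by positivity),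
                ← ENNReal.ofReal_mul (by positivity)]
      -- combine with the key lemma, at every scale k = n
      have hbd : ∀ n : ℕ, μ {x | t < r x} ≤ ENNReal.ofReal (K₁ * q^n) := by
        intro n
        have hvb : (2:ℝ) ^ (σ * ((n:ℤ):ℝ)) * B ≤ t ^ (1/p) / 2 := by
          rw [← hB0, mul_zero]
          positivity
        refine (keylemma t ht (n:ℤ) hvb).trans ?_
        have step := mul_le_mul_right (mul_le_mul_right
          (hcheb (n:ℤ)) (ENNReal.ofReal (Mθ^2))) (ENNReal.ofReal ((t ^ (1/p)/2)^2))⁻¹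
        refine step.trans (le_of_eq ?_)
        rw [← ENNReal.ofReal_inv_of_pos (by positivity),
          ← ENNReal.ofReal_mul (by positivity), ← ENNReal.ofReal_mul (by positivity)]
        congr 1
        have e1 : ((c * (2:ℝ) ^ ((n:ℤ):ℝ)) ^ (2*s))⁻¹ = (c ^ (2*s))⁻¹ * q^n := by
          rw [Real.mul_rpow hc.le (by positivity), mul_inv]
          congr 1
          rw [show ((n:ℤ):ℝ) = (n:ℝ) from by push_cast; ring,
            ← Real.rpow_mul (by norm_num : (0:ℝ) ≤ 2), mul_comm (n:ℝ) (2*s),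
            Real.rpow_mul (by norm_num : (0:ℝ) ≤ 2), Real.rpow_natCast, ← inv_pow, hqdef]
        rw [e1, hK₁def]
        ring
      have htend : Filter.Tendsto (fun n : ℕ => ENNReal.ofReal (K₁ * q^n))
          Filter.atTop (nhds 0) := by
        have h0 : Filter.Tendsto (fun n : ℕ => K₁ * q^n) Filter.atTop (nhds 0) := by
          simpa using (tendsto_pow_atTop_nhds_zero_of_lt_one hq0 hq1).const_mul K₁
        simpa using ENNReal.tendsto_ofReal h0
      have := ge_of_tendsto' htend hbd
      exact le_antisymm this (zero_le)
    have haez : ∀ᵐ t ∂(volume.restrict (Set.Ioi (0:ℝ))), μ {x | t < r x} = 0 :=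
      (ae_restrict_iff' measurableSet_Ioi).2 (Filter.Eventually.of_forall hzero)
    calc ∫⁻ t in Set.Ioi (0:ℝ), μ {x | t < r x}
        = ∫⁻ _ in Set.Ioi (0:ℝ), 0 := lintegral_congr_ae haez
      _ = 0 := lintegral_zero
      _ ≤ _ := zero_le
  · -- main case B > 0
    set f : ℝ → ℝ := fun τ => ((2/c) * (2*B) ^ (1/σ) * |τ|) ^ (p*σ) with hfdef
    have ha0 : (0:ℝ) < (2/c) * (2*B) ^ (1/σ) := by positivity
    have hfnn : ∀ τ, 0 ≤ f τ := fun τ => Real.rpow_nonneg (by positivity) _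
    have hfmeas : Measurable f :=
      ((continuous_const.mul continuous_abs).rpow_const (fun τ => Or.inr (by positivity))).measurable
    -- the pointwise estimate on the distribution function
    have bound : ∀ t ∈ Set.Ioi (0:ℝ), μ {x | t < r x}
        ≤ ν {τ | t < f τ} * ENNReal.ofReal (4*Mθ^2 * t ^ (-(2/p))) := by
      intro t ht
      rw [Set.mem_Ioi] at ht
      have hlam0 : 0 < t ^ (1/p) := Real.rpow_pos_of_pos ht _
      set lam := t ^ (1/p) with hlamdef
      set y : ℝ := (lam/(2*B)) ^ (1/σ) with hydef
      have hy0 : 0 < y := Real.rpow_pos_of_pos (by positivity) _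
      set k : ℤ := ⌊Real.logb 2 y⌋ with hkdef
      have hlogy : (2:ℝ) ^ Real.logb 2 y = y := Real.rpow_logb two_pos (by norm_num) hy0
      have h1 : (2:ℝ) ^ (k:ℝ) ≤ y := by
        calc (2:ℝ) ^ (k:ℝ) ≤ 2 ^ Real.logb 2 y :=
              Real.rpow_le_rpow_of_exponent_le one_le_two (Int.floor_le _)
          _ = y := hlogy
      have h2 : y < 2 ^ ((k:ℝ)+1) := by
        calc y = 2 ^ Real.logb 2 y := hlogy.symm
          _ < 2 ^ ((k:ℝ)+1) := Real.rpow_lt_rpow_of_exponent_lt one_lt_two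
              (by rw [hkdef]; exact_mod_cast Int.lt_floor_add_one (Real.logb 2 y))
      have h2' : y/2 < 2 ^ (k:ℝ) := by
        rw [Real.rpow_add two_pos, Real.rpow_one] at h2
        linarith
      have hvb : (2:ℝ) ^ (σ*(k:ℝ)) * B ≤ lam/2 := by
        have e1 : (2:ℝ) ^ (σ*(k:ℝ)) = ((2:ℝ) ^ (k:ℝ)) ^ σ := by
          rw [← Real.rpow_mul (by norm_num : (0:ℝ) ≤ 2), mul_comm]
        have e2 : y ^ σ = lam/(2*B) := by
          rw [hydef, ← Real.rpow_mul (by positivity), one_div,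
            inv_mul_cancel₀ hσ', Real.rpow_one]
        have h3 : ((2:ℝ) ^ (k:ℝ)) ^ σ ≤ y ^ σ :=
          Real.rpow_le_rpow (by positivity) h1 hσ.le
        rw [e1]
        calc ((2:ℝ) ^ (k:ℝ)) ^ σ * B ≤ (lam/(2*B)) * B :=
              mul_le_mul_of_nonneg_right (h3.trans e2.le) hB
          _ = lam/2 := by field_simp <;> ring
      have hsub : {τ : ℝ | c * (2:ℝ) ^ (k:ℝ) < |τ|} ⊆ {τ | t < f τ} := by
        intro τ hτ
        simp only [Set.mem_setOf_eq] at hτ ⊢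
        have step : (c/2) * y < |τ| := by
          have h4 : c * (y/2) < c * 2 ^ (k:ℝ) := mul_lt_mul_of_pos_left h2' hc
          calc (c/2) * y = c * (y/2) := by ring
            _ < c * 2 ^ (k:ℝ) := h4
            _ < |τ| := hτ
        have e3 : (2*B) ^ (1/σ) * y = lam ^ (1/σ) := by
          rw [hydef, ← Real.mul_rpow (by positivity) (by positivity)]
          congr 1
          field_simp
        have hbase : lam ^ (1/σ) < (2/c) * (2*B) ^ (1/σ) * |τ| := by
          have e4 : (2/c) * (2*B) ^ (1/σ) * ((c/2)*y) = lam ^ (1/σ) := by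
            rw [← e3]
            field_simp
          rw [← e4]
          exact mul_lt_mul_of_pos_left step ha0
        have e5 : (lam ^ (1/σ)) ^ (p*σ) = t := by
          rw [← Real.rpow_mul hlam0.le,
            show (1/σ)*(p*σ) = p from by field_simp <;> ring, hlamdef,
            ← Real.rpow_mul ht.le, one_div, inv_mul_cancel₀ hp0.ne', Real.rpow_one]
        calc t = (lam ^ (1/σ)) ^ (p*σ) := e5.symm
          _ < ((2/c) * (2*B) ^ (1/σ) * |τ|) ^ (p*σ) :=
              Real.rpow_lt_rpow (Real.rpow_nonneg hlam0.le _) hbase (by positivity)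
      refine (keylemma t ht k hvb).trans ?_
      calc (ENNReal.ofReal ((lam/2)^2))⁻¹
            * (ENNReal.ofReal (Mθ^2) * ν {τ | c * (2:ℝ) ^ (k:ℝ) < |τ|})
          ≤ (ENNReal.ofReal ((lam/2)^2))⁻¹
            * (ENNReal.ofReal (Mθ^2) * ν {τ | t < f τ}) :=
            mul_le_mul_right (mul_le_mul_right (measure_mono hsub) _) _
        _ = ν {τ | t < f τ} * ENNReal.ofReal (4*Mθ^2 * t ^ (-(2/p))) := by
            rw [← ENNReal.ofReal_inv_of_pos (by positivity), ← mul_assoc,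
              ← ENNReal.ofReal_mul (by positivity), mul_comm]
            congr 2
            have e6 : (lam/2)^2 = t ^ (2/p) / 4 := by
              rw [div_pow, hlamdef, ← Real.rpow_natCast (t ^ (1/p)) 2,
                ← Real.rpow_mul ht.le]
              norm_num
              rw [show p⁻¹ * 2 = 2/p from by ring]
            have ht2p : (0:ℝ) < t ^ (2/p) := Real.rpow_pos_of_pos ht _
            rw [e6, Real.rpow_neg ht.le]
            field_simp <;> ring
    -- the chain of (in)equalities
    have hg_intble : ∀ tt : ℝ, 0 < tt →
        IntervalIntegrable (fun x : ℝ => 4*Mθ^2 * x ^ (-(2/p))) volume 0 tt := by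
      intro tt _
      have h2p1 : (-1:ℝ) < -(2/p) := by
        have : 2/p < 1 := (div_lt_one hp0).2 hp2
        linarith
      exact (intervalIntegral.intervalIntegrable_rpow' h2p1).const_mul _
    have hgnn : ∀ᵐ tt ∂(volume.restrict (Set.Ioi (0:ℝ))), 0 ≤ 4*Mθ^2 * tt ^ (-(2/p)) := by
      refine (ae_restrict_iff' measurableSet_Ioi).2 (Filter.Eventually.of_forall ?_)
      intro tt htt
      rw [Set.mem_Ioi] at htt
      positivity
    set D : ℝ := 4*Mθ^2 * (p/(p-2)) * ((2/c) * (2*B) ^ (1/σ)) ^ (2*s) with hDdef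
    have hDnn : 0 ≤ D := by
      have := Real.rpow_nonneg ha0.le (2*s)
      rw [hDdef]
      positivity
    calc ∫⁻ x, (‖u x‖₊ : ℝ≥0∞) ^ p ∂μ
        = ∫⁻ t in Set.Ioi (0:ℝ), μ {x | t < r x} := layer1
      _ ≤ ∫⁻ t in Set.Ioi (0:ℝ), ν {τ | t < f τ} * ENNReal.ofReal (4*Mθ^2 * t ^ (-(2/p))) :=
          lintegral_mono_ae ((ae_restrict_iff' measurableSet_Ioi).2
            (Filter.Eventually.of_forall bound))
      _ = ∫⁻ τ, ENNReal.ofReal (∫ tt in (0:ℝ)..(f τ), 4*Mθ^2 * tt ^ (-(2/p))) ∂ν :=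
          (lintegral_comp_eq_lintegral_meas_lt_mul ν (Filter.Eventually.of_forall hfnn)
            hfmeas.aemeasurable hg_intble hgnn).symm
      _ = ∫⁻ τ, ENNReal.ofReal D * ENNReal.ofReal (|τ| ^ (2*s)) ∂ν := by
          refine lintegral_congr fun τ => ?_
          rw [← ENNReal.ofReal_mul hDnn]
          congr 1
          have h2p1 : (-1:ℝ) < -(2/p) := by
            have : 2/p < 1 := (div_lt_one hp0).2 hp2
            linarith
          have hne : -(2/p) + 1 ≠ 0 := by
            have : 2/p < 1 := (div_lt_one hp0).2 hp2
            intro h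
            nlinarith [h]
          rw [intervalIntegral.integral_const_mul, integral_rpow (Or.inl h2p1),
            Real.zero_rpow hne, sub_zero]
          have e10 : (f τ) ^ (-(2/p)+1)
              = ((2/c) * (2*B) ^ (1/σ)) ^ (2*s) * |τ| ^ (2*s) := by
            simp only [hfdef]
            rw [← Real.rpow_mul (by positivity),
              show (p*σ)*(-(2/p)+1) = 2*s from by rw [← hσp2]; field_simp <;> ring,
              Real.mul_rpow ha0.le (abs_nonneg _)]
          rw [e10, hDdef]
          have h2p0 : -(2/p) + 1 = (p-2)/p := by field_simp <;> ring
          rw [h2p0]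
          field_simp
      _ = ENNReal.ofReal D * ENNReal.ofReal (H^2) := by
          rw [lintegral_const_mul' _ _ ENNReal.ofReal_ne_top, hH2]
      _ = ENNReal.ofReal (C' ^ p) := by
          rw [← ENNReal.ofReal_mul hDnn]
          congr 1
          -- the constant identity
          have e7 : ((2/c) * (2*B) ^ (1/σ)) ^ (2*s)
              = (2/c) ^ (2*s) * (2:ℝ) ^ (p-2) * B ^ (p-2) := by
            rw [Real.mul_rpow (by positivity) (Real.rpow_nonneg (by positivity) _),
              ← Real.rpow_mul (by positivity : (0:ℝ) ≤ 2*B),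
              show 1/σ * (2*s) = p - 2 from by
                rw [← hσp2]; field_simp,
              Real.mul_rpow (by norm_num) hB]
            ring
          have E1 : (2/p)*p = 2 := div_mul_cancel₀ 2 hp0.ne'
          have E2 : (1/p)*p = 1 := one_div_mul_cancel hp0.ne'
          have E3 : (σ*(p-2)/p)*p = σ*(p-2) := div_mul_cancel₀ _ hp0.ne'
          have E4 : (1-2/p)*p = p-2 := by field_simp <;> ring
          have e8 : C' ^ p = (2:ℝ) ^ p * Mθ^2 * (p/(p-2)) * (2/c) ^ (σ*(p-2))
              * B ^ (p-2) * H^2 := by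
            rw [hC'def,
              Real.mul_rpow (by positivity) (Real.rpow_nonneg hH _),
              Real.mul_rpow (by positivity) (Real.rpow_nonneg hB _),
              Real.mul_rpow (by positivity) (Real.rpow_nonneg (by positivity) _),
              Real.mul_rpow (by positivity) (Real.rpow_nonneg (by positivity) _),
              Real.mul_rpow (by norm_num) (Real.rpow_nonneg hMθ _),
              ← Real.rpow_mul hMθ, ← Real.rpow_mul (by positivity : (0:ℝ) ≤ p/(p-2)),
              ← Real.rpow_mul (by positivity : (0:ℝ) ≤ 2/c),
              ← Real.rpow_mul hB, ← Real.rpow_mul hH,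
              E1, E2, E3, E4, Real.rpow_one, Real.rpow_two, Real.rpow_two]
          have e9 : (2:ℝ) ^ p = 4 * (2:ℝ) ^ (p-2) := by
            rw [show p = 2 + (p-2) from by ring, Real.rpow_add two_pos, Real.rpow_two]
            norm_num
          rw [hDdef, e7, e8, hσp2, e9]
          ring
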